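/- Foundation for the Cognitive Hierarchy model: fix an anchor p and a full-support level distribution f on ℕ₀. For every level k ≥ 1, every reasoning order n ≥ k, and every player i, the set of n-C-rationalizable actions of type θ_{i,k} equals CH^k_i[p, f], the CH level-k behavior of player i. -/
import Mathlib


open Finset

/-- A probability distribution (as weights) on a finite set. -/
def IsDist {B : Type} [Fintype B] (ν : B → ℝ) : Prop :=
  (∀ b, 0 ≤ ν b) ∧ ∑ b, ν b = 1

/-- `a` is a best reply to the conjecture `ν` (weights on the co-player's actions). -/
def isBR {A B : Type} [Fintype A] [Fintype B] (u : A → B → ℝ) (ν : B → ℝ) (a : A) : Prop :=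
  ∀ a' : A, ∑ b, ν b * u a' b ≤ ∑ b, ν b * u a b

/-- `a` is strictly dominated by some mixed action. -/
def Dominated {A B : Type} [Fintype A] [Fintype B] (u : A → B → ℝ) (a : A) : Prop :=
  ∃ α : A → ℝ, IsDist α ∧ ∀ b : B, (∑ a', α a' * u a' b) > u a b

/-- One step of iterated elimination: best replies (within `S`) to conjectures on `T`. -/
def BRstep {A B : Type} [Fintype A] [Fintype B] (u : A → B → ℝ) (S : Set A) (T : Set B) :
    Set A :=
  {a | a ∈ S ∧ ∃ ν : B → ℝ, IsDist ν ∧ (∀ b, ν b ≠ 0 → b ∈ T) ∧ isBR u ν a}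

/-- `n`-rationalizability in the complete-information game. -/
def Rseq {A B : Type} [Fintype A] [Fintype B] (u1 : A → B → ℝ) (u2 : B → A → ℝ) :
    ℕ → Set A × Set B
  | 0 => (Set.univ, Set.univ)
  | n + 1 =>
    (BRstep u1 (Rseq u1 u2 n).1 (Rseq u1 u2 n).2,
     BRstep u2 (Rseq u1 u2 n).2 (Rseq u1 u2 n).1)

/-- Best replies to conjectures concentrated on `T`. -/
def Lstep {A B : Type} [Fintype A] [Fintype B] (u : A → B → ℝ) (T : Set B) : Set A :=
  {a | ∃ ν : B → ℝ, IsDist ν ∧ (∀ b, ν b ≠ 0 → b ∈ T) ∧ isBR u ν a}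

/-- The classic level-k solution under anchor `(p1, p2)`; `Lk … k` is level-`k` behavior
(meaningful for `k ≥ 1`). -/
def Lk {A B : Type} [Fintype A] [Fintype B] (u1 : A → B → ℝ) (u2 : B → A → ℝ)
    (p1 : A → ℝ) (p2 : B → ℝ) : ℕ → Set A × Set B
  | 0 => (Set.univ, Set.univ)
  | 1 => ({a | isBR u1 p2 a}, {b | isBR u2 p1 b})
  | k + 2 =>
    (Lstep u1 (Lk u1 u2 p1 p2 (k + 1)).2,
     Lstep u2 (Lk u1 u2 p1 p2 (k + 1)).1)

/-- A Ĝ-conjecture over the co-player's (level-type, action) pairs: a finitely supported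
type-marginal together with conditional action distributions. -/
structure GConj (B : Type) [Fintype B] where
  m : ℕ →₀ ℝ
  m_nonneg : ∀ t, 0 ≤ m t
  m_sum : (m.sum fun _ w => w) = 1
  cond : ℕ → B → ℝ
  cond_dist : ∀ t, IsDist (cond t)

/-- Marginal of a Ĝ-conjecture on the co-player's actions. -/
noncomputable def margAct {B : Type} [Fintype B] (μ : GConj B) : B → ℝ :=
  fun b => μ.m.sum fun t w => w * μ.cond t b

/-- (K1): conditional on the co-player being of type 0 (if deemed possible),
play follows the anchor `q`. -/
def K1 {B : Type} [Fintype B] (q : B → ℝ) (μ : GConj B) : Prop :=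
  μ.m 0 ≠ 0 → μ.cond 0 = q

/-- (K2): only co-player types strictly below `k` are deemed possible. -/
def K2 {B : Type} [Fintype B] (k : ℕ) (μ : GConj B) : Prop :=
  ∀ t, μ.m t ≠ 0 → t < k

/-- (KL): only the co-player type `k - 1` is deemed possible. -/
def KL {B : Type} [Fintype B] (k : ℕ) (μ : GConj B) : Prop :=
  ∀ t, μ.m t ≠ 0 → t = k - 1

/-- Truncation `f^k` of the level distribution `f` at `k`. -/
noncomputable def ftrunc (f : ℕ → ℝ) (k t : ℕ) : ℝ :=
  f t / ∑ t' ∈ Finset.range k, f t'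

/-- (KC): the type-marginal equals the truncation of `f` at `k`. -/
def KC {B : Type} [Fintype B] (f : ℕ → ℝ) (k : ℕ) (μ : GConj B) : Prop :=
  ∀ t < k, μ.m t = ftrunc f k t

/-- A full-support level distribution on ℕ. -/
def FullDist (f : ℕ → ℝ) : Prop :=
  (∀ t, 0 < f t) ∧ HasSum f 1

/-- One step of Δ-rationalizability for one player, under belief restrictions `Δ`
(type-0 pairs always survive, since type-0 payoffs are constant). -/
def Dstep {A B : Type} [Fintype A] [Fintype B] (u : A → B → ℝ)
    (Δ : ℕ → GConj B → Prop) (S : Set (ℕ × A)) (T : Set (ℕ × B)) : Set (ℕ × A) :=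
  {x | x ∈ S ∧ (x.1 = 0 ∨ ∃ μ : GConj B, Δ x.1 μ ∧
      (∀ t b, μ.m t ≠ 0 → μ.cond t b ≠ 0 → (t, b) ∈ T) ∧ isBR u (margAct μ) x.2)}

/-- Δ-rationalizability in the derived game with payoff uncertainty. -/
def DeltaRat {A B : Type} [Fintype A] [Fintype B] (u1 : A → B → ℝ) (u2 : B → A → ℝ)
    (Δ1 : ℕ → GConj B → Prop) (Δ2 : ℕ → GConj A → Prop) :
    ℕ → Set (ℕ × A) × Set (ℕ × B)
  | 0 => (Set.univ, Set.univ)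
  | n + 1 =>
    (Dstep u1 Δ1 (DeltaRat u1 u2 Δ1 Δ2 n).1 (DeltaRat u1 u2 Δ1 Δ2 n).2,
     Dstep u2 Δ2 (DeltaRat u1 u2 Δ1 Δ2 n).2 (DeltaRat u1 u2 Δ1 Δ2 n).1)

/-- Belief restrictions for downward rationalizability: (K1) and (K2). -/
def DownR {B : Type} [Fintype B] (q : B → ℝ) : ℕ → GConj B → Prop :=
  fun k μ => K1 q μ ∧ K2 k μ

/-- Belief restrictions for L-rationalizability: (K1), (K2) and (KL). -/
def LR {B : Type} [Fintype B] (q : B → ℝ) : ℕ → GConj B → Prop :=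
  fun k μ => K1 q μ ∧ K2 k μ ∧ KL k μ

/-- Belief restrictions for C-rationalizability: (K1), (K2) and (KC). -/
def CR {B : Type} [Fintype B] (q : B → ℝ) (f : ℕ → ℝ) : ℕ → GConj B → Prop :=
  fun k μ => K1 q μ ∧ K2 k μ ∧ KC f k μ

section Sets

variable {A B : Type} [Fintype A] [Fintype B]

/-- `n`-downward-rationalizable actions of player 1's type `θ_{1,k}`. -/
def DSet (u1 : A → B → ℝ) (u2 : B → A → ℝ) (p1 : A → ℝ) (p2 : B → ℝ) (n k : ℕ) : Set A :=
  {a | (k, a) ∈ (DeltaRat u1 u2 (DownR p2) (DownR p1) n).1}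

/-- `n`-downward-rationalizable actions of player 2's type `θ_{2,k}`. -/
def DSet2 (u1 : A → B → ℝ) (u2 : B → A → ℝ) (p1 : A → ℝ) (p2 : B → ℝ) (n k : ℕ) : Set B :=
  {b | (k, b) ∈ (DeltaRat u1 u2 (DownR p2) (DownR p1) n).2}

def DSetInf (u1 : A → B → ℝ) (u2 : B → A → ℝ) (p1 : A → ℝ) (p2 : B → ℝ) (k : ℕ) : Set A :=
  ⋂ n, DSet u1 u2 p1 p2 n k

def DSet2Inf (u1 : A → B → ℝ) (u2 : B → A → ℝ) (p1 : A → ℝ) (p2 : B → ℝ) (k : ℕ) : Set B :=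
  ⋂ n, DSet2 u1 u2 p1 p2 n k

/-- `n`-L-rationalizable actions of player 1's type `θ_{1,k}`. -/
def LSet (u1 : A → B → ℝ) (u2 : B → A → ℝ) (p1 : A → ℝ) (p2 : B → ℝ) (n k : ℕ) : Set A :=
  {a | (k, a) ∈ (DeltaRat u1 u2 (LR p2) (LR p1) n).1}

/-- `n`-L-rationalizable actions of player 2's type `θ_{2,k}`. -/
def LSet2 (u1 : A → B → ℝ) (u2 : B → A → ℝ) (p1 : A → ℝ) (p2 : B → ℝ) (n k : ℕ) : Set B :=
  {b | (k, b) ∈ (DeltaRat u1 u2 (LR p2) (LR p1) n).2}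

def LSetInf (u1 : A → B → ℝ) (u2 : B → A → ℝ) (p1 : A → ℝ) (p2 : B → ℝ) (k : ℕ) : Set A :=
  ⋂ n, LSet u1 u2 p1 p2 n k

def LSet2Inf (u1 : A → B → ℝ) (u2 : B → A → ℝ) (p1 : A → ℝ) (p2 : B → ℝ) (k : ℕ) : Set B :=
  ⋂ n, LSet2 u1 u2 p1 p2 n k

/-- `n`-C-rationalizable actions of player 1's type `θ_{1,k}`. -/
def CSet (u1 : A → B → ℝ) (u2 : B → A → ℝ) (p1 : A → ℝ) (p2 : B → ℝ) (f : ℕ → ℝ)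
    (n k : ℕ) : Set A :=
  {a | (k, a) ∈ (DeltaRat u1 u2 (CR p2 f) (CR p1 f) n).1}

/-- `n`-C-rationalizable actions of player 2's type `θ_{2,k}`. -/
def CSet2 (u1 : A → B → ℝ) (u2 : B → A → ℝ) (p1 : A → ℝ) (p2 : B → ℝ) (f : ℕ → ℝ)
    (n k : ℕ) : Set B :=
  {b | (k, b) ∈ (DeltaRat u1 u2 (CR p2 f) (CR p1 f) n).2}

/-- The Cognitive Hierarchy solution: `CHsol … k` is CH level-`k` behavior (`k ≥ 1`). -/
def CHsol (u1 : A → B → ℝ) (u2 : B → A → ℝ) (p1 : A → ℝ) (p2 : B → ℝ) (f : ℕ → ℝ) :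
    ℕ → Set A × Set B
  | 0 => (Set.univ, Set.univ)
  | 1 => ({a | isBR u1 p2 a}, {b | isBR u2 p1 b})
  | k + 2 =>
    ({a | ∃ μ : GConj B, K2 (k + 2) μ ∧ KC f (k + 2) μ ∧ K1 p2 μ ∧
        (∀ t, 0 < t → ∀ _ : t < k + 2, ∀ b, μ.m t ≠ 0 → μ.cond t b ≠ 0 →
          b ∈ (CHsol u1 u2 p1 p2 f t).2) ∧
        isBR u1 (margAct μ) a},
     {b | ∃ μ : GConj A, K2 (k + 2) μ ∧ KC f (k + 2) μ ∧ K1 p1 μ ∧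
        (∀ t, 0 < t → ∀ _ : t < k + 2, ∀ a, μ.m t ≠ 0 → μ.cond t a ≠ 0 →
          a ∈ (CHsol u1 u2 p1 p2 f t).1) ∧
        isBR u2 (margAct μ) b})
  termination_by k => k

end Sets

section Aux

variable {A B : Type} [Fintype A] [Fintype B]

/-- Type-0 pairs survive every round of Δ-rationalizability. -/
lemma zero_mem (u1 : A → B → ℝ) (u2 : B → A → ℝ)
    (Δ1 : ℕ → GConj B → Prop) (Δ2 : ℕ → GConj A → Prop) :
    ∀ n, (∀ a : A, ((0 : ℕ), a) ∈ (DeltaRat u1 u2 Δ1 Δ2 n).1) ∧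
         (∀ b : B, ((0 : ℕ), b) ∈ (DeltaRat u1 u2 Δ1 Δ2 n).2) := by
  intro n
  induction n with
  | zero => exact ⟨fun a => Set.mem_univ _, fun b => Set.mem_univ _⟩
  | succ n ih => exact ⟨fun a => ⟨ih.1 a, Or.inl rfl⟩, fun b => ⟨ih.2 b, Or.inl rfl⟩⟩

/-- A conjecture satisfying (K1), (K2) and (KC) at level 1 has action-marginal `q`. -/
lemma margAct_level_one (q : B → ℝ) (f : ℕ → ℝ) (hf : FullDist f)
    (μ : GConj B) (h1 : K1 q μ) (h2 : K2 1 μ) (hc : KC f 1 μ) : margAct μ = q := by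
  have hf0 : f 0 ≠ 0 := ne_of_gt (hf.1 0)
  have hm0 : μ.m 0 = 1 := by
    have := hc 0 (by norm_num)
    rw [this, ftrunc, Finset.sum_range_one, div_self hf0]
  have hmu : μ.m = Finsupp.single 0 1 := by
    ext t
    rcases Nat.eq_zero_or_pos t with rfl | ht
    · simp [hm0]
    · have hz : μ.m t = 0 := by
        by_contra h
        have := h2 t h
        omega
      rw [hz, Finsupp.single_apply, if_neg (by omega)]
  have hcond : μ.cond 0 = q := h1 (by rw [hm0]; norm_num)
  funext b
  unfold margAct
  rw [hmu, Finsupp.sum_single_index (by ring), hcond, one_mul]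

/-- The level-1 conjecture: type 0 with probability one, anchored at `q`. -/
noncomputable def anchorConj (q : B → ℝ) (hq : IsDist q) : GConj B where
  m := Finsupp.single 0 1
  m_nonneg := fun t => by
    rw [Finsupp.single_apply]
    split <;> norm_num
  m_sum := by rw [Finsupp.sum_single_index] <;> rfl
  cond := fun _ => q
  cond_dist := fun _ => hq

lemma anchorConj_K1 (q : B → ℝ) (hq : IsDist q) : K1 q (anchorConj q hq) := fun _ => rfl

lemma anchorConj_K2 (q : B → ℝ) (hq : IsDist q) : K2 1 (anchorConj q hq) := by
  intro t h
  by_contra hlt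
  have ht : t ≠ 0 := by omega
  exact h (by simp [anchorConj, Finsupp.single_apply, if_neg (Ne.symm ht)])

lemma anchorConj_KC (q : B → ℝ) (hq : IsDist q) (f : ℕ → ℝ) (hf : FullDist f) :
    KC f 1 (anchorConj q hq) := by
  intro t ht
  have ht0 : t = 0 := by omega
  subst ht0
  have hf0 : f 0 ≠ 0 := ne_of_gt (hf.1 0)
  simp [anchorConj, ftrunc, Finset.sum_range_one, div_self hf0]

lemma anchorConj_marg (q : B → ℝ) (hq : IsDist q) (f : ℕ → ℝ) (hf : FullDist f) :
    margAct (anchorConj q hq) = q :=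
  margAct_level_one q f hf _ (anchorConj_K1 q hq) (anchorConj_K2 q hq) (anchorConj_KC q hq f hf)

/-- CH behavior is `n`-C-rationalizable for every `n`. -/
lemma CH_subset_CSet (u1 : A → B → ℝ) (u2 : B → A → ℝ) (p1 : A → ℝ) (p2 : B → ℝ)
    (hp1 : IsDist p1) (hp2 : IsDist p2) (f : ℕ → ℝ) (hf : FullDist f) :
    ∀ n k, 1 ≤ k →
      ((CHsol u1 u2 p1 p2 f k).1 ⊆ CSet u1 u2 p1 p2 f n k) ∧
      ((CHsol u1 u2 p1 p2 f k).2 ⊆ CSet2 u1 u2 p1 p2 f n k) := by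
  intro n
  induction n with
  | zero => exact fun k hk => ⟨fun a _ => Set.mem_univ _, fun b _ => Set.mem_univ _⟩
  | succ n ih =>
    intro k hk
    constructor
    · intro a ha
      refine ⟨(ih k hk).1 ha, Or.inr ?_⟩
      match k, hk with
      | 1, _ =>
        simp only [CHsol, Set.mem_setOf_eq] at ha
        refine ⟨anchorConj p2 hp2, ⟨anchorConj_K1 p2 hp2, anchorConj_K2 p2 hp2,
          anchorConj_KC p2 hp2 f hf⟩, ?_, ?_⟩
        · intro t b hmt _
          have ht : t = 0 := by
            by_contra h
            have := anchorConj_K2 p2 hp2 t hmt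
            omega
          subst ht
          exact (zero_mem u1 u2 (CR p2 f) (CR p1 f) n).2 b
        · rw [anchorConj_marg p2 hp2 f hf]
          exact ha
      | (j+2), _ =>
        simp only [CHsol, Set.mem_setOf_eq] at ha
        obtain ⟨μ, hK2, hKC, hK1, hsupp, hBR⟩ := ha
        refine ⟨μ, ⟨hK1, hK2, hKC⟩, ?_, hBR⟩
        intro t b hmt hcb
        rcases Nat.eq_zero_or_pos t with rfl | ht
        · exact (zero_mem u1 u2 (CR p2 f) (CR p1 f) n).2 b
        · exact (ih t ht).2 (hsupp t ht (hK2 t hmt) b hmt hcb)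
    · intro b hb
      refine ⟨(ih k hk).2 hb, Or.inr ?_⟩
      match k, hk with
      | 1, _ =>
        simp only [CHsol, Set.mem_setOf_eq] at hb
        refine ⟨anchorConj p1 hp1, ⟨anchorConj_K1 p1 hp1, anchorConj_K2 p1 hp1,
          anchorConj_KC p1 hp1 f hf⟩, ?_, ?_⟩
        · intro t a hmt _
          have ht : t = 0 := by
            by_contra h
            have := anchorConj_K2 p1 hp1 t hmt
            omega
          subst ht
          exact (zero_mem u1 u2 (CR p2 f) (CR p1 f) n).1 a
        · rw [anchorConj_marg p1 hp1 f hf]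
          exact hb
      | (j+2), _ =>
        simp only [CHsol, Set.mem_setOf_eq] at hb
        obtain ⟨μ, hK2, hKC, hK1, hsupp, hBR⟩ := hb
        refine ⟨μ, ⟨hK1, hK2, hKC⟩, ?_, hBR⟩
        intro t a hmt hca
        rcases Nat.eq_zero_or_pos t with rfl | ht
        · exact (zero_mem u1 u2 (CR p2 f) (CR p1 f) n).1 a
        · exact (ih t ht).1 (hsupp t ht (hK2 t hmt) a hmt hca)

/-- `n`-C-rationalizable actions of type `k` are CH level-`k` behavior, for `n ≥ k`. -/
lemma CSet_subset_CH (u1 : A → B → ℝ) (u2 : B → A → ℝ) (p1 : A → ℝ) (p2 : B → ℝ)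
    (hp1 : IsDist p1) (hp2 : IsDist p2) (f : ℕ → ℝ) (hf : FullDist f) :
    ∀ k, 1 ≤ k → ∀ n, k ≤ n →
      (CSet u1 u2 p1 p2 f n k ⊆ (CHsol u1 u2 p1 p2 f k).1) ∧
      (CSet2 u1 u2 p1 p2 f n k ⊆ (CHsol u1 u2 p1 p2 f k).2) := by
  intro k
  induction k using Nat.strong_induction_on with
  | _ k IH =>
    intro hk n hn
    obtain ⟨m, rfl⟩ : ∃ m, n = m + 1 := ⟨n - 1, by omega⟩
    constructor
    · intro a ha
      obtain ⟨hprev, hcase⟩ := ha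
      rcases hcase with h0 | ⟨μ, ⟨hK1, hK2, hKC⟩, hsupp, hBR⟩
      · exact absurd h0 (by omega)
      · match k, hk, hK1, hK2, hKC, hsupp, IH, hn with
        | 1, _, hK1, hK2, hKC, hsupp, IH, hn =>
          simp only [CHsol, Set.mem_setOf_eq]
          rw [← margAct_level_one p2 f hf μ hK1 hK2 hKC]
          exact hBR
        | (j+2), _, hK1, hK2, hKC, hsupp, IH, hn =>
          simp only [CHsol, Set.mem_setOf_eq]
          refine ⟨μ, hK2, hKC, hK1, ?_, hBR⟩
          intro t ht htk b hmt hcb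
          exact (IH t htk (by omega) m (by omega)).2 (hsupp t b hmt hcb)
    · intro b hb
      obtain ⟨hprev, hcase⟩ := hb
      rcases hcase with h0 | ⟨μ, ⟨hK1, hK2, hKC⟩, hsupp, hBR⟩
      · exact absurd h0 (by omega)
      · match k, hk, hK1, hK2, hKC, hsupp, IH, hn with
        | 1, _, hK1, hK2, hKC, hsupp, IH, hn =>
          simp only [CHsol, Set.mem_setOf_eq]
          rw [← margAct_level_one p1 f hf μ hK1 hK2 hKC]
          exact hBR
        | (j+2), _, hK1, hK2, hKC, hsupp, IH, hn =>
          simp only [CHsol, Set.mem_setOf_eq]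
          refine ⟨μ, hK2, hKC, hK1, ?_, hBR⟩
          intro t ht htk a hmt hca
          exact (IH t htk (by omega) m (by omega)).1 (hsupp t a hmt hca)

end Aux

/-- foundation for the Cognitive Hierarchy model: for `k ≥ 1` and
`n ≥ k`, the `n`-C-rationalizable actions of type `θ_{i,k}` equal CH level-`k`
behavior. -/
theorem C_equals_CH {A B : Type} [Fintype A] [Fintype B]
    (u1 : A → B → ℝ) (u2 : B → A → ℝ) (p1 : A → ℝ) (p2 : B → ℝ)
    (hp1 : IsDist p1) (hp2 : IsDist p2) (f : ℕ → ℝ) (hf : FullDist f)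
    (k : ℕ) (hk : 1 ≤ k) (n : ℕ) (hn : k ≤ n) :
    CSet u1 u2 p1 p2 f n k = (CHsol u1 u2 p1 p2 f k).1 ∧
    CSet2 u1 u2 p1 p2 f n k = (CHsol u1 u2 p1 p2 f k).2 := by
  constructor
  · exact Set.Subset.antisymm
      ((CSet_subset_CH u1 u2 p1 p2 hp1 hp2 f hf k hk n hn).1)
      ((CH_subset_CSet u1 u2 p1 p2 hp1 hp2 f hf n k hk).1)
  · exact Set.Subset.antisymm
      ((CSet_subset_CH u1 u2 p1 p2 hp1 hp2 f hf k hk n hn).2)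
      ((CH_subset_CSet u1 u2 p1 p2 hp1 hp2 f hf n k hk).2)
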